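/- Let G be a finite connected graph with |E(G)| > ν₂(G) and ν₂(G) ≥ 5, and suppose γ(G) = ν₂(G) − 1. Then for every maximum 2-packing R of G (that is, |R| = ν₂(G)), the subgraph G[R] is a forest (it contains no cycle). -/

import Mathlib

/-- A dominating set: every vertex is in `D` or adjacent to a vertex of `D`. -/
def IsDominatingSet {V : Type*} (G : SimpleGraph V) (D : Finset V) : Prop :=
  ∀ v : V, v ∈ D ∨ ∃ u ∈ D, G.Adj u v

/-- The domination number `γ(G)`: minimum cardinality of a dominating set. -/
noncomputable def dominationNumber {V : Type*} [Fintype V] (G : SimpleGraph V) : ℕ :=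
  sInf {n | ∃ D : Finset V, IsDominatingSet G D ∧ D.card = n}

/-- A 2-packing: a set of edges of `G` such that no three (pairwise distinct)
edges share a common vertex. -/
def IsTwoPacking {V : Type*} (G : SimpleGraph V) (R : Finset (Sym2 V)) : Prop :=
  (↑R : Set (Sym2 V)) ⊆ G.edgeSet ∧
  ∀ e₁ ∈ R, ∀ e₂ ∈ R, ∀ e₃ ∈ R, ∀ v : V,
    v ∈ e₁ → v ∈ e₂ → v ∈ e₃ → (e₁ = e₂ ∨ e₁ = e₃ ∨ e₂ = e₃)

/-- The 2-packing number `ν₂(G)`: maximum cardinality of a 2-packing. -/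
noncomputable def twoPackingNumber {V : Type*} [Fintype V] (G : SimpleGraph V) : ℕ :=
  sSup {n | ∃ R : Finset (Sym2 V), IsTwoPacking G R ∧ R.card = n}

lemma exists_three_distinct {α : Type*} [DecidableEq α] {s : Finset α} (h : 2 < s.card) :
    ∃ e₁ ∈ s, ∃ e₂ ∈ s, ∃ e₃ ∈ s, e₁ ≠ e₂ ∧ e₁ ≠ e₃ ∧ e₂ ≠ e₃ := by
  have hne1 : s.Nonempty := Finset.card_pos.mp (by omega)
  obtain ⟨e₁, h₁⟩ := hne1
  have hne2 : (s.erase e₁).Nonempty := Finset.card_pos.mp (by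
    rw [Finset.card_erase_of_mem h₁]; omega)
  obtain ⟨e₂, h₂⟩ := hne2
  have hne3 : ((s.erase e₁).erase e₂).Nonempty := Finset.card_pos.mp (by
    rw [Finset.card_erase_of_mem h₂, Finset.card_erase_of_mem h₁]; omega)
  obtain ⟨e₃, h₃⟩ := hne3
  exact ⟨e₁, h₁, e₂, Finset.mem_of_mem_erase h₂,
    e₃, Finset.mem_of_mem_erase (Finset.mem_of_mem_erase h₃),
    (Finset.ne_of_mem_erase h₂).symm,
    (Finset.ne_of_mem_erase (Finset.mem_of_mem_erase h₃)).symm,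
    (Finset.ne_of_mem_erase h₃).symm⟩

lemma twoPacking_filter_card_le {V : Type*} [DecidableEq V]
    {G : SimpleGraph V} {R : Finset (Sym2 V)} (hR : IsTwoPacking G R) (v : V) :
    (R.filter (fun e => v ∈ e)).card ≤ 2 := by
  by_contra h
  push_neg at h
  obtain ⟨e₁, h₁, e₂, h₂, e₃, h₃, h12, h13, h23⟩ := exists_three_distinct h
  have m₁ := Finset.mem_filter.mp h₁
  have m₂ := Finset.mem_filter.mp h₂
  have m₃ := Finset.mem_filter.mp h₃
  rcases hR.2 e₁ m₁.1 e₂ m₂.1 e₃ m₃.1 v m₁.2 m₂.2 m₃.2 with h' | h' | h' <;> simp_all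

lemma isTwoPacking_of_filter {V : Type*} [DecidableEq V]
    {G : SimpleGraph V} {S : Finset (Sym2 V)}
    (hsub : (↑S : Set (Sym2 V)) ⊆ G.edgeSet)
    (hdeg : ∀ v : V, (S.filter (fun e => v ∈ e)).card ≤ 2) :
    IsTwoPacking G S := by
  refine ⟨hsub, ?_⟩
  intro e₁ h₁ e₂ h₂ e₃ h₃ v hv₁ hv₂ hv₃
  by_contra h
  push_neg at h
  obtain ⟨h12, h13, h23⟩ := h
  have hsub' : ({e₁, e₂, e₃} : Finset (Sym2 V)) ⊆ S.filter (fun e => v ∈ e) := by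
    intro x hx
    simp only [Finset.mem_insert, Finset.mem_singleton] at hx
    rcases hx with rfl | rfl | rfl <;> exact Finset.mem_filter.mpr ⟨by assumption, by assumption⟩
  have hc : ({e₁, e₂, e₃} : Finset (Sym2 V)).card = 3 := by
    rw [Finset.card_insert_of_notMem (by simp [h12, h13]),
      Finset.card_insert_of_notMem (by simp [h23]), Finset.card_singleton]
  have h5 := Finset.card_le_card hsub'
  rw [hc] at h5
  have := hdeg v
  omega

lemma card_le_twoPackingNumber {V : Type*} [Fintype V] {G : SimpleGraph V}
    {S : Finset (Sym2 V)} (hS : IsTwoPacking G S) : S.card ≤ twoPackingNumber G := by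
  classical
  apply le_csSup
  · refine ⟨Fintype.card (Sym2 V), ?_⟩
    rintro n ⟨T, _, rfl⟩
    exact Finset.card_le_univ T
  · exact ⟨S, hS, rfl⟩


/-- The edge-induced subgraph `G[R]`: its vertices are the endpoints of the
edges of `R` (that are edges of `G`), and its edges are the edges of `R`. -/
def edgeInducedSubgraph {V : Type*} (G : SimpleGraph V) (R : Set (Sym2 V)) : G.Subgraph where
  verts := {v | ∃ e ∈ R ∩ G.edgeSet, v ∈ e}
  Adj a b := s(a, b) ∈ R ∧ G.Adj a b
  adj_sub h := h.2
  edge_vert h := ⟨s(_, _), ⟨h.1, h.2⟩, Sym2.mem_mk_left _ _⟩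
  symm := ⟨fun a b h => ⟨by rw [Sym2.eq_swap]; exact h.1, h.2.symm⟩⟩

/-- If `G` is a finite connected graph with `|E(G)| > ν₂(G)`, `ν₂(G) ≥ 5` and
`γ(G) = ν₂(G) - 1`, then for every maximum 2-packing `R` of `G` the subgraph
`G[R]` is a forest (i.e. acyclic). -/
theorem edgeInduced_isAcyclic_of_dominationNumber_eq {V : Type*} [Fintype V]
    (G : SimpleGraph V) (hconn : G.Connected)
    (hE : twoPackingNumber G < G.edgeSet.ncard)
    (hnu : 5 ≤ twoPackingNumber G)
    (hgamma : dominationNumber G = twoPackingNumber G - 1)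
    (R : Finset (Sym2 V)) (hR : IsTwoPacking G R)
    (hmax : R.card = twoPackingNumber G) :
    (edgeInducedSubgraph G ↑R).coe.IsAcyclic := by
  by_contra hna
  classical
  rw [SimpleGraph.IsAcyclic] at hna
  push_neg at hna
  obtain ⟨w0, p, hp⟩ := hna
  set l := p.support.tail with hldef
  have hk3 : 3 ≤ l.length := by
    have h1 : l.length = p.length := by
      rw [hldef, List.length_tail, SimpleGraph.Walk.length_support]; omega
    rw [h1]; exact hp.three_le_length
  have hk0 : 0 < l.length := by omega
  have hlne : l ≠ [] := List.ne_nil_of_length_pos hk0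
  have hnodup : l.Nodup := hp.support_nodup
  have hchain : List.Chain (edgeInducedSubgraph G ↑R).coe.Adj w0 l := by
    have h1 := p.isChain_adj_support
    rw [p.support_eq_cons] at h1
    exact h1
  have hlast : l.getLast hlne = w0 := by
    have h2 := List.getLast_tail (l := p.support) (show p.support.tail ≠ [] from hlne)
    rw [p.getLast_support] at h2
    exact h2
  replace hchain : (∀ h : 0 < l.length, (edgeInducedSubgraph G ↑R).coe.Adj w0 (l.get ⟨0, h⟩)) ∧
      ∀ (i : ℕ) (h : i < l.length - 1),
        (edgeInducedSubgraph G ↑R).coe.Adj (l.get ⟨i, by omega⟩) (l.get ⟨i + 1, by omega⟩) := by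
    have h := List.isChain_iff_getElem.mp hchain
    exact ⟨fun h0 => h 0 (by simp; omega), fun i hi => h (i + 1) (by simp; omega)⟩
  obtain ⟨hc0, hcc'⟩ := hchain
  -- the cyclic vertex function
  set k := l.length with hkdef
  set cV : ℕ → V := fun i => (l.get ⟨i % k, Nat.mod_lt i hk0⟩ : _).val with hcV
  have hmodeq : ∀ i j : ℕ, i % k = j % k → cV i = cV j := by
    intro i j h
    have hfin : (⟨i % k, Nat.mod_lt i hk0⟩ : Fin l.length) = ⟨j % k, Nat.mod_lt j hk0⟩ := by
      simp only [Fin.mk.injEq]; exact h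
    simp only [hcV, hfin]
  have hinjmod : ∀ i j : ℕ, cV i = cV j → i % k = j % k := by
    intro i j h
    simp only [hcV] at h
    have h2 : l.get ⟨i % k, Nat.mod_lt i hk0⟩ = l.get ⟨j % k, Nat.mod_lt j hk0⟩ :=
      Subtype.ext h
    have h3 := (List.Nodup.get_inj_iff hnodup).mp h2
    exact congrArg Fin.val h3
  have hedge : ∀ i : ℕ, s(cV i, cV (i+1)) ∈ R := by
    intro i
    have hjlt : i % k < k := Nat.mod_lt i hk0
    have h1k : (1 : ℕ) % k = 1 := Nat.mod_eq_of_lt (by omega)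
    rcases Nat.lt_or_ge (i % k + 1) k with hlt | hge
    · have hadj := hcc' (i % k) (by omega)
      rw [SimpleGraph.Subgraph.coe_adj] at hadj
      have hmem : s((l.get ⟨i % k, hjlt⟩).val, (l.get ⟨i % k + 1, by omega⟩).val) ∈ R :=
        Finset.mem_coe.mp hadj.1
      have h4 : cV (i+1) = (l.get ⟨i % k + 1, by omega⟩).val := by
        have hfin : (⟨(i+1) % k, Nat.mod_lt (i+1) hk0⟩ : Fin l.length) = ⟨i % k + 1, by omega⟩ := by
          simp only [Fin.mk.injEq]
          rw [Nat.add_mod, h1k, Nat.mod_eq_of_lt hlt]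
        simp only [hcV, hfin]
      have h5 : cV i = (l.get ⟨i % k, hjlt⟩).val := rfl
      rw [h4, h5]
      exact hmem
    · have hik : i % k = k - 1 := by omega
      have h5 : (i+1) % k = 0 := by
        rw [Nat.add_mod, h1k, show i % k + 1 = k by omega, Nat.mod_self]
      have h6 : l.get ⟨i % k, hjlt⟩ = w0 := by
        have hfin : (⟨i % k, hjlt⟩ : Fin l.length) = ⟨l.length - 1, by omega⟩ := by
          simp only [Fin.mk.injEq]; omega
        rw [hfin, List.get_eq_getElem, ← List.getLast_eq_getElem]
        exact hlast
      have hadj := hc0 hk0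
      rw [SimpleGraph.Subgraph.coe_adj] at hadj
      have hmem : s(w0.val, (l.get ⟨0, hk0⟩).val) ∈ R := Finset.mem_coe.mp hadj.1
      have h7 : cV i = w0.val := by rw [show cV i = (l.get ⟨i % k, hjlt⟩).val from rfl, h6]
      have h8 : cV (i+1) = (l.get ⟨0, hk0⟩).val := by
        have hfin : (⟨(i+1) % k, Nat.mod_lt (i+1) hk0⟩ : Fin l.length) = ⟨0, hk0⟩ := by
          simp only [Fin.mk.injEq]; exact h5
        simp only [hcV, hfin]
      rw [h7, h8]
      exact hmem
  -- derived arithmetic facts about cV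
  have hper : ∀ i : ℕ, cV (i + k) = cV i := fun i => hmodeq _ _ (Nat.add_mod_right i k)
  have hineq : ∀ i d : ℕ, 0 < d → d < k → cV i ≠ cV (i + d) := by
    intro i d hd hdk h
    have h2 : i ≡ i + d [MOD k] := hinjmod _ _ h
    have h4 := (Nat.modEq_iff_dvd' (Nat.le_add_right i d)).mp h2
    rw [Nat.add_sub_cancel_left] at h4
    have h5 := Nat.le_of_dvd hd h4
    omega
  -- degrees
  set degR : V → ℕ := fun x => (R.filter (fun e => x ∈ e)).card with hdegR
  have hdegle : ∀ x, degR x ≤ 2 := fun x => twoPacking_filter_card_le hR x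
  have heprevR : ∀ i : ℕ, s(cV (i + (k-1)), cV i) ∈ R := by
    intro i
    have h1 := hedge (i + (k-1))
    rw [show i + (k-1) + 1 = i + k by omega, hper i] at h1
    exact h1
  have hEne : ∀ i : ℕ, (s(cV (i+(k-1)), cV i) : Sym2 V) ≠ s(cV i, cV (i+1)) := by
    intro i h
    rcases Sym2.eq_iff.mp h with ⟨h1, h2⟩ | ⟨h1, h2⟩
    · exact hineq i 1 one_pos (by omega) h2
    · rw [show i + (k-1) = (i+1) + (k-2) by omega] at h1
      exact hineq (i+1) (k-2) (by omega) (by omega) h1.symm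
  have hfiltc : ∀ i : ℕ, R.filter (fun e => cV i ∈ e)
      = {s(cV (i+(k-1)), cV i), s(cV i, cV (i+1))} := by
    intro i
    refine (Finset.eq_of_subset_of_card_le ?_ ?_).symm
    · intro e he
      rcases Finset.mem_insert.mp he with rfl | he2
      · exact Finset.mem_filter.mpr ⟨heprevR i, Sym2.mem_mk_right _ _⟩
      · rw [Finset.mem_singleton] at he2
        subst he2
        exact Finset.mem_filter.mpr ⟨hedge i, Sym2.mem_mk_left _ _⟩
    · rw [Finset.card_pair (hEne i)]
      exact hdegle (cV i)
  have hdeg2 : ∀ i : ℕ, degR (cV i) = 2 := by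
    intro i
    show (R.filter (fun e => cV i ∈ e)).card = 2
    rw [hfiltc i]
    exact Finset.card_pair (hEne i)
  have hmemc : ∀ (i : ℕ) (e : Sym2 V), e ∈ R → cV i ∈ e →
      e = s(cV (i+(k-1)), cV i) ∨ e = s(cV i, cV (i+1)) := by
    intro i e he hv
    have h1 : e ∈ R.filter (fun e => cV i ∈ e) := Finset.mem_filter.mpr ⟨he, hv⟩
    rw [hfiltc i] at h1
    simpa using h1
  have hadjnext : ∀ i : ℕ, G.Adj (cV i) (cV (i+1)) := fun i =>
    (SimpleGraph.mem_edgeSet _).mp (hR.1 (Finset.mem_coe.mpr (hedge i)))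
  have hadjprev : ∀ i : ℕ, G.Adj (cV (i+(k-1))) (cV i) := fun i =>
    (SimpleGraph.mem_edgeSet _).mp (hR.1 (Finset.mem_coe.mpr (heprevR i)))
  have hzero_notmem : ∀ x : V, degR x = 0 → ∀ e ∈ R, x ∉ e := by
    intro x hx e he hxe
    have h1 : e ∈ R.filter (fun e => x ∈ e) := Finset.mem_filter.mpr ⟨he, hxe⟩
    have h2 : R.filter (fun e => x ∈ e) = ∅ := Finset.card_eq_zero.mp hx
    rw [h2] at h1
    exact absurd h1 (Finset.notMem_empty e)
  have haug : ∀ x z : V, G.Adj x z → degR x ≤ 1 → degR z ≤ 1 → s(x, z) ∈ R := by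
    intro x z hadj hdx hdz
    by_contra hn
    have hpack : IsTwoPacking G (insert s(x,z) R) := by
      apply isTwoPacking_of_filter
      · intro e he
        simp only [Finset.coe_insert, Set.mem_insert_iff] at he
        rcases he with rfl | he
        · exact (SimpleGraph.mem_edgeSet _).mpr hadj
        · exact hR.1 he
      · intro u
        rw [Finset.filter_insert]
        split_ifs with h
        · refine (Finset.card_insert_le _ _).trans ?_
          rcases Sym2.mem_iff.mp h with rfl | rfl
          · have h7 : (R.filter (fun e => u ∈ e)).card ≤ 1 := hdx
            omega
          · have h7 : (R.filter (fun e => u ∈ e)).card ≤ 1 := hdz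
            omega
        · exact hdegle u
    have h6 := card_le_twoPackingNumber hpack
    rw [Finset.card_insert_of_notMem hn] at h6
    omega
  -- the swap lemma: no two consecutive cycle vertices both have a degree-0 neighbour
  set Pbad : ℕ → Prop := fun i => ∃ w, degR w = 0 ∧ G.Adj (cV i) w with hPbad
  have hswap : ∀ i : ℕ, Pbad i → Pbad (i+1) → False := by
    rintro i ⟨w₁, hw₁, ha₁⟩ ⟨w₂, hw₂, ha₂⟩
    have hcine : cV i ≠ cV (i+1) := hineq i 1 one_pos (by omega)
    have hw₁cc : ∀ j, w₁ ≠ cV j := by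
      intro j h
      rw [h] at hw₁
      rw [hdeg2 j] at hw₁
      omega
    have hw₂cc : ∀ j, w₂ ≠ cV j := by
      intro j h
      rw [h] at hw₂
      rw [hdeg2 j] at hw₂
      omega
    have hf₁R : s(cV i, w₁) ∉ R := fun h =>
      hzero_notmem w₁ hw₁ _ h (Sym2.mem_mk_right _ _)
    have hf₂R : s(cV (i+1), w₂) ∉ R := fun h =>
      hzero_notmem w₂ hw₂ _ h (Sym2.mem_mk_right _ _)
    have hf12 : s(cV i, w₁) ≠ s(cV (i+1), w₂) := by
      intro h
      rcases Sym2.eq_iff.mp h with ⟨h1, h2⟩ | ⟨h1, h2⟩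
      · exact hcine h1
      · exact hw₂cc i h1.symm
    have he0R := hedge i
    have hf₂mem : s(cV (i+1), w₂) ∉ R.erase s(cV i, cV (i+1)) := fun h =>
      hf₂R (Finset.mem_of_mem_erase h)
    have hf₁mem : s(cV i, w₁) ∉ insert s(cV (i+1), w₂) (R.erase s(cV i, cV (i+1))) := by
      intro h
      rcases Finset.mem_insert.mp h with h | h
      · exact hf12 h
      · exact hf₁R (Finset.mem_of_mem_erase h)
    have hRpos : 0 < R.card := Finset.card_pos.mpr ⟨_, he0R⟩
    have hScard : (insert s(cV i, w₁) (insert s(cV (i+1), w₂)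
        (R.erase s(cV i, cV (i+1))))).card = R.card + 1 := by
      rw [Finset.card_insert_of_notMem hf₁mem, Finset.card_insert_of_notMem hf₂mem,
        Finset.card_erase_of_mem he0R]
      omega
    have hpack : IsTwoPacking G (insert s(cV i, w₁) (insert s(cV (i+1), w₂)
        (R.erase s(cV i, cV (i+1))))) := by
      apply isTwoPacking_of_filter
      · intro e he
        simp only [Finset.coe_insert, Set.mem_insert_iff] at he
        rcases he with rfl | rfl | he
        · exact (SimpleGraph.mem_edgeSet _).mpr ha₁
        · exact (SimpleGraph.mem_edgeSet _).mpr ha₂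
        · exact hR.1 (Finset.mem_coe.mpr (Finset.mem_of_mem_erase (Finset.mem_coe.mp he)))
      · intro u
        by_cases hu0 : degR u = 0
        · have hsub : (insert s(cV i, w₁) (insert s(cV (i+1), w₂)
              (R.erase s(cV i, cV (i+1))))).filter (fun e => u ∈ e)
              ⊆ {s(cV i, w₁), s(cV (i+1), w₂)} := by
            intro e he'
            obtain ⟨heS, hue⟩ := Finset.mem_filter.mp he'
            rcases Finset.mem_insert.mp heS with rfl | h'
            · exact Finset.mem_insert_self _ _
            rcases Finset.mem_insert.mp h' with rfl | h''
            · exact Finset.mem_insert.mpr (Or.inr (Finset.mem_singleton_self _))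
            · exact absurd hue (hzero_notmem u hu0 e (Finset.mem_of_mem_erase h''))
          refine (Finset.card_le_card hsub).trans ?_
          refine (Finset.card_insert_le _ _).trans ?_
          simp
        · have huw₁ : u ≠ w₁ := fun h => hu0 (h ▸ hw₁)
          have huw₂ : u ≠ w₂ := fun h => hu0 (h ▸ hw₂)
          rw [Finset.filter_insert, Finset.filter_insert, Finset.filter_erase]
          by_cases hui : u = cV i
          · have hun2 : u ∉ (s(cV (i+1), w₂) : Sym2 V) := by
              intro h
              rcases Sym2.mem_iff.mp h with h | h
              · exact hcine (hui ▸ h)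
              · exact huw₂ h
            have hu1 : u ∈ (s(cV i, w₁) : Sym2 V) := hui ▸ Sym2.mem_mk_left _ _
            rw [if_pos hu1, if_neg hun2]
            have he0f : s(cV i, cV (i+1)) ∈ R.filter (fun e => u ∈ e) :=
              Finset.mem_filter.mpr ⟨he0R, hui ▸ Sym2.mem_mk_left _ _⟩
            have hce := Finset.card_erase_of_mem he0f
            have h9 : (R.filter (fun e => u ∈ e)).card ≤ 2 := hdegle u
            have h10 : 0 < (R.filter (fun e => u ∈ e)).card :=
              Finset.card_pos.mpr ⟨_, he0f⟩
            refine (Finset.card_insert_le _ _).trans ?_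
            omega
          · by_cases hui1 : u = cV (i+1)
            · have hun1 : u ∉ (s(cV i, w₁) : Sym2 V) := by
                intro h
                rcases Sym2.mem_iff.mp h with h | h
                · exact hui h
                · exact huw₁ h
              have hu2 : u ∈ (s(cV (i+1), w₂) : Sym2 V) := hui1 ▸ Sym2.mem_mk_left _ _
              rw [if_neg hun1, if_pos hu2]
              have he0f : s(cV i, cV (i+1)) ∈ R.filter (fun e => u ∈ e) :=
                Finset.mem_filter.mpr ⟨he0R, hui1 ▸ Sym2.mem_mk_right _ _⟩
              have hce := Finset.card_erase_of_mem he0f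
              have h9 : (R.filter (fun e => u ∈ e)).card ≤ 2 := hdegle u
              have h10 : 0 < (R.filter (fun e => u ∈ e)).card :=
                Finset.card_pos.mpr ⟨_, he0f⟩
              refine (Finset.card_insert_le _ _).trans ?_
              omega
            · have hun1 : u ∉ (s(cV i, w₁) : Sym2 V) := by
                intro h
                rcases Sym2.mem_iff.mp h with h | h
                · exact hui h
                · exact huw₁ h
              have hun2 : u ∉ (s(cV (i+1), w₂) : Sym2 V) := by
                intro h
                rcases Sym2.mem_iff.mp h with h | h
                · exact hui1 h
                · exact huw₂ h
              rw [if_neg hun1, if_neg hun2]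
              refine (Finset.card_erase_le).trans ?_
              exact hdegle u
    have h6 := card_le_twoPackingNumber hpack
    rw [hScard] at h6
    omega
  -- choose two good, distinct cycle vertices
  obtain ⟨a, b, hA, hB, habne⟩ : ∃ a b : ℕ, ¬ Pbad a ∧ ¬ Pbad b ∧ cV a ≠ cV b := by
    set Sg : Finset ℕ := (Finset.range k).filter (fun i => ¬ Pbad i) with hSg
    have hbadof : ∀ i, i < k → i ∉ Sg → Pbad i := by
      intro i hik hin
      by_contra hnp
      exact hin (Finset.mem_filter.mpr ⟨Finset.mem_range.mpr hik, hnp⟩)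
    rcases Nat.lt_or_ge Sg.card 2 with h2 | h2
    · exfalso
      rcases (show Sg.card = 0 ∨ Sg.card = 1 by omega) with h0 | h1
      · have hSe : Sg = ∅ := Finset.card_eq_zero.mp h0
        refine hswap 0 (hbadof 0 (by omega) (by simp [hSe])) ?_
        exact hbadof 1 (by omega) (by simp [hSe])
      · obtain ⟨g, hg⟩ := Finset.card_eq_one.mp h1
        have hgk : g < k := by
          have : g ∈ Sg := hg ▸ Finset.mem_singleton_self g
          exact Finset.mem_range.mp (Finset.mem_filter.mp this).1
        have h1k : (1 : ℕ) % k = 1 := Nat.mod_eq_of_lt (by omega)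
        have hi₁lt : (g+1) % k < k := Nat.mod_lt _ hk0
        have hi₂lt : (g+2) % k < k := Nat.mod_lt _ hk0
        have hi₁g : (g+1) % k ≠ g := by
          rcases Nat.lt_or_ge (g+1) k with h | h
          · rw [Nat.mod_eq_of_lt h]; omega
          · have hgg : g + 1 = k := by omega
            rw [hgg, Nat.mod_self]; omega
        have hi₂g : (g+2) % k ≠ g := by
          rcases Nat.lt_or_ge (g+2) k with h | h
          · rw [Nat.mod_eq_of_lt h]; omega
          · rcases Nat.eq_or_lt_of_le h with h' | h'
            · rw [← h', Nat.mod_self]; omega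
            · have hgg : g + 2 = k + 1 := by omega
              rw [hgg, Nat.add_mod_left, h1k]; omega
        have hp₁ : Pbad ((g+1) % k) := hbadof _ hi₁lt (by rw [hg]; simp [hi₁g])
        have hp₂ : Pbad ((g+2) % k) := hbadof _ hi₂lt (by rw [hg]; simp [hi₂g])
        have hcc12 : cV ((g+1) % k + 1) = cV ((g+2) % k) := by
          apply hmodeq
          calc ((g+1) % k + 1) % k = ((g+1) % k + 1 % k) % k := by rw [h1k]
            _ = ((g+1) + 1) % k := (Nat.add_mod _ _ _).symm
            _ = (g+2) % k := by norm_num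
            _ = ((g+2) % k) % k := (Nat.mod_mod_of_dvd _ dvd_rfl).symm
        refine hswap ((g+1) % k) hp₁ ?_
        obtain ⟨w, hw, ha'⟩ := hp₂
        exact ⟨w, hw, hcc12 ▸ ha'⟩
    · obtain ⟨a, ha, b, hb, hab⟩ := Finset.one_lt_card.mp h2
      obtain ⟨hak, hpa⟩ := Finset.mem_filter.mp ha
      obtain ⟨hbk, hpb⟩ := Finset.mem_filter.mp hb
      refine ⟨a, b, hpa, hpb, fun h => hab ?_⟩
      have h3 := hinjmod _ _ h
      rwa [Nat.mod_eq_of_lt (Finset.mem_range.mp hak),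
        Nat.mod_eq_of_lt (Finset.mem_range.mp hbk)] at h3
  -- counting
  have hcard2 : ∀ e, e ∈ R → (Finset.univ.filter (fun x : V => x ∈ e)).card = 2 := by
    intro e
    induction e using Sym2.ind with
    | _ x y =>
      intro he
      have hadj : G.Adj x y := (SimpleGraph.mem_edgeSet _).mp (hR.1 (Finset.mem_coe.mpr he))
      have hxy : x ≠ y := G.ne_of_adj hadj
      have hxy2 : Finset.univ.filter (fun z : V => z ∈ (s(x,y) : Sym2 V)) = {x, y} := by
        ext z
        simp [Sym2.mem_iff]
      rw [hxy2, Finset.card_pair hxy]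
  have hsum1 : ∑ x : V, degR x = 2 * R.card := by
    calc ∑ x : V, degR x
        = ∑ x : V, ∑ e ∈ R, if x ∈ e then 1 else 0 := by
          refine Finset.sum_congr rfl fun x _ => ?_
          exact Finset.card_filter _ _
      _ = ∑ e ∈ R, ∑ x : V, if x ∈ e then 1 else 0 := Finset.sum_comm
      _ = ∑ e ∈ R, (Finset.univ.filter (fun x : V => x ∈ e)).card := by
          refine Finset.sum_congr rfl fun e _ => ?_
          exact (Finset.card_filter _ _).symm
      _ = ∑ _e ∈ R, 2 := Finset.sum_congr rfl fun e he => hcard2 e he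
      _ = 2 * R.card := by rw [Finset.sum_const, smul_eq_mul, mul_comm]
  set V2 : Finset V := Finset.univ.filter (fun x => degR x = 2) with hV2
  set V1 : Finset V := Finset.univ.filter (fun x => degR x = 1) with hV1
  have hsum2 : 2 * V2.card + V1.card ≤ ∑ x : V, degR x := by
    have hsplit := Finset.sum_filter_add_sum_filter_not Finset.univ
      (fun x : V => degR x = 2) degR
    rw [← hV2] at hsplit
    have hA2 : ∑ x ∈ V2, degR x = 2 * V2.card := by
      rw [Finset.sum_congr rfl (fun x hx => ((Finset.mem_filter.mp hx).2 : degR x = 2)),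
        Finset.sum_const, smul_eq_mul, mul_comm]
    have hB2 : V1.card ≤ ∑ x ∈ Finset.univ.filter (fun x : V => ¬ degR x = 2), degR x := by
      have hc : V1.card = ∑ x ∈ V1, degR x := by
        rw [Finset.sum_congr rfl (fun x hx => ((Finset.mem_filter.mp hx).2 : degR x = 1))]
        simp
        rfl
      rw [hc]
      refine Finset.sum_le_sum_of_subset ?_
      intro x hx
      obtain ⟨_, hx2⟩ := Finset.mem_filter.mp hx
      exact Finset.mem_filter.mpr ⟨Finset.mem_univ x, by omega⟩
    omega
  set Riso : Finset (Sym2 V) := R.filter (fun e => ∀ x ∈ e, degR x = 1) with hRiso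
  have hsum3 : 2 * Riso.card ≤ V1.card := by
    have hdisj : ∀ e ∈ Riso, ∀ f ∈ Riso, e ≠ f →
        Disjoint (Finset.univ.filter (fun x : V => x ∈ e))
          (Finset.univ.filter (fun x : V => x ∈ f)) := by
      intro e heI f hfI hef
      rw [Finset.disjoint_left]
      intro x hxe hxf
      have hxe' : x ∈ e := (Finset.mem_filter.mp hxe).2
      have hxf' : x ∈ f := (Finset.mem_filter.mp hxf).2
      have hd1 : degR x = 1 := (Finset.mem_filter.mp heI).2 x hxe'
      have hsubp : ({e, f} : Finset (Sym2 V)) ⊆ R.filter (fun e' => x ∈ e') := by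
        intro t ht
        rcases Finset.mem_insert.mp ht with rfl | ht'
        · exact Finset.mem_filter.mpr ⟨(Finset.mem_filter.mp heI).1, hxe'⟩
        · rw [Finset.mem_singleton] at ht'
          subst ht'
          exact Finset.mem_filter.mpr ⟨(Finset.mem_filter.mp hfI).1, hxf'⟩
      have h11 := Finset.card_le_card hsubp
      rw [Finset.card_pair hef] at h11
      have h12 : (R.filter (fun e' => x ∈ e')).card = 1 := hd1
      omega
    have hbu := Finset.card_biUnion hdisj
    have h13 : ∑ e ∈ Riso, (Finset.univ.filter (fun x : V => x ∈ e)).card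
        = 2 * Riso.card := by
      rw [Finset.sum_congr rfl (fun e he => hcard2 e (Finset.mem_filter.mp he).1),
        Finset.sum_const, smul_eq_mul, mul_comm]
    have hsubV1 : Riso.biUnion (fun e => Finset.univ.filter (fun x : V => x ∈ e)) ⊆ V1 := by
      intro x hx
      obtain ⟨e, he, hxe⟩ := Finset.mem_biUnion.mp hx
      exact Finset.mem_filter.mpr ⟨Finset.mem_univ x,
        (Finset.mem_filter.mp he).2 x (Finset.mem_filter.mp hxe).2⟩
    calc 2 * Riso.card = _ := h13.symm
      _ = (Riso.biUnion (fun e => Finset.univ.filter (fun x : V => x ∈ e))).card := hbu.symm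
      _ ≤ V1.card := Finset.card_le_card hsubV1
  -- the choice function for isolated edges
  have hex : ∀ e : Sym2 V, ∃ x, x ∈ e := fun e =>
    Sym2.ind (fun x y => ⟨x, Sym2.mem_mk_left x y⟩) e
  set pick : Sym2 V → V := fun e => Classical.choose (hex e) with hpickdef
  have hpick : ∀ e, pick e ∈ e := fun e => Classical.choose_spec (hex e)
  set X : Finset V := Riso.image pick with hX
  set D : Finset V := (V2 \ {cV a, cV b}) ∪ X with hD
  have hpairV2 : ({cV a, cV b} : Finset V) ⊆ V2 := by
    intro x hx
    rcases Finset.mem_insert.mp hx with rfl | hx'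
    · exact Finset.mem_filter.mpr ⟨Finset.mem_univ _, hdeg2 a⟩
    · rw [Finset.mem_singleton] at hx'
      subst hx'
      exact Finset.mem_filter.mpr ⟨Finset.mem_univ _, hdeg2 b⟩
  have hDcard : D.card ≤ R.card - 2 := by
    have h1 := Finset.card_union_le (V2 \ {cV a, cV b}) X
    rw [← hD] at h1
    have h2 : (V2 \ {cV a, cV b}).card = V2.card - 2 := by
      rw [Finset.card_sdiff_of_subset hpairV2, Finset.card_pair habne]
    have h3 : X.card ≤ Riso.card := Finset.card_image_le
    have h4 : 2 ≤ V2.card := by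
      have := Finset.card_le_card hpairV2
      rw [Finset.card_pair habne] at this
      exact this
    omega
  -- D is a dominating set
  have hDdom : IsDominatingSet G D := by
    intro x
    have hdx := hdegle x
    rcases (show degR x = 0 ∨ degR x = 1 ∨ degR x = 2 by omega) with h0 | h1 | h2
    · -- degree 0
      right
      have hxc0 : x ≠ cV 0 := by
        intro h
        rw [h, hdeg2 0] at h0
        omega
      obtain ⟨q⟩ := hconn.preconnected x (cV 0)
      cases q with
      | nil => exact absurd rfl hxc0
      | @cons _ z _ hadj q' =>
        have hnR : s(x, z) ∉ R := by
          intro hmm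
          have h1' : s(x,z) ∈ R.filter (fun e => x ∈ e) :=
            Finset.mem_filter.mpr ⟨hmm, Sym2.mem_mk_left _ _⟩
          rw [Finset.card_eq_zero.mp h0] at h1'
          exact absurd h1' (Finset.notMem_empty _)
        have hz2 : degR z = 2 := by
          by_contra hz
          have hz1 : degR z ≤ 1 := by have := hdegle z; omega
          exact hnR (haug x z hadj (by omega) hz1)
        by_cases hza : z = cV a
        · exact absurd ⟨x, h0, show G.Adj (cV a) x by rw [← hza]; exact hadj.symm⟩ hA
        by_cases hzb : z = cV b
        · exact absurd ⟨x, h0, show G.Adj (cV b) x by rw [← hzb]; exact hadj.symm⟩ hB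
        refine ⟨z, ?_, hadj.symm⟩
        refine Finset.mem_union_left _ (Finset.mem_sdiff.mpr
          ⟨Finset.mem_filter.mpr ⟨Finset.mem_univ _, hz2⟩, ?_⟩)
        intro hmem
        rcases Finset.mem_insert.mp hmem with h | h
        · exact hza h
        · exact hzb (Finset.mem_singleton.mp h)
    · -- degree 1
      have h1' : (R.filter (fun e => x ∈ e)).card = 1 := h1
      obtain ⟨e, he⟩ := Finset.card_eq_one.mp h1'
      have heR : e ∈ R ∧ x ∈ e := by
        have h1'' : e ∈ R.filter (fun e => x ∈ e) := by
          rw [he]; exact Finset.mem_singleton_self e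
        exact Finset.mem_filter.mp h1''
      obtain ⟨u, hu⟩ := Sym2.mem_iff_exists.mp heR.2
      subst hu
      have hadjxu : G.Adj x u := (SimpleGraph.mem_edgeSet _).mp (hR.1 (Finset.mem_coe.mpr heR.1))
      have hxu : x ≠ u := G.ne_of_adj hadjxu
      have hu1le : degR u ≤ 2 := hdegle u
      have hu1ge : 1 ≤ degR u :=
        Finset.card_pos.mpr ⟨s(x,u), Finset.mem_filter.mpr ⟨heR.1, Sym2.mem_mk_right _ _⟩⟩
      rcases (show degR u = 1 ∨ degR u = 2 by omega) with hu1 | hu2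
      · -- isolated edge: use the picked endpoint
        have hiso : (s(x,u) : Sym2 V) ∈ Riso := by
          refine Finset.mem_filter.mpr ⟨heR.1, ?_⟩
          intro z hz
          rcases Sym2.mem_iff.mp hz with rfl | rfl
          · exact h1
          · exact hu1
        have hpx := hpick s(x,u)
        have hxX : pick s(x,u) ∈ X := Finset.mem_image.mpr ⟨s(x,u), hiso, rfl⟩
        rcases Sym2.mem_iff.mp hpx with hpe | hpe
        · left
          rw [← hpe]
          exact Finset.mem_union_right _ hxX
        · right
          exact ⟨pick s(x,u), Finset.mem_union_right _ hxX, by rw [hpe]; exact hadjxu.symm⟩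
      · -- the R-neighbour has degree 2 and is not a cycle vertex
        have hucc : ∀ i, u ≠ cV i := by
          intro i hq
          have hmm : cV i ∈ (s(x,u) : Sym2 V) := by
            rw [← hq]; exact Sym2.mem_mk_right _ _
          rcases hmemc i s(x,u) heR.1 hmm with hcase | hcase
          · rcases Sym2.eq_iff.mp hcase with ⟨hx1, hx2⟩ | ⟨hx1, hx2⟩
            · rw [hx1, hdeg2 (i+(k-1))] at h1
              omega
            · exact hxu (hx1.trans hq.symm)
          · rcases Sym2.eq_iff.mp hcase with ⟨hx1, hx2⟩ | ⟨hx1, hx2⟩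
            · exact hxu (hx1.trans hq.symm)
            · rw [hx1, hdeg2 (i+1)] at h1
              omega
        right
        refine ⟨u, ?_, hadjxu.symm⟩
        refine Finset.mem_union_left _ (Finset.mem_sdiff.mpr
          ⟨Finset.mem_filter.mpr ⟨Finset.mem_univ _, hu2⟩, ?_⟩)
        intro hmm
        rcases Finset.mem_insert.mp hmm with h | h
        · exact hucc a h
        · exact hucc b (Finset.mem_singleton.mp h)
    · -- degree 2
      by_cases hpp : x ∈ ({cV a, cV b} : Finset V)
      · right
        have hkey : ∀ i : ℕ, (cV i = cV a ∨ cV i = cV b) → ∃ u ∈ D, G.Adj u (cV i) := by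
          intro i hi
          have hne1 : cV (i+1) ≠ cV i := (hineq i 1 one_pos (by omega)).symm
          have hnek : cV (i+(k-1)) ≠ cV i := (hineq i (k-1) (by omega) (by omega)).symm
          have hne2 : cV (i+1) ≠ cV (i+(k-1)) := by
            rw [show i + (k-1) = (i+1) + (k-2) by omega]
            exact hineq (i+1) (k-2) (by omega) (by omega)
          by_cases hc1 : cV (i+1) ∈ ({cV a, cV b} : Finset V)
          · refine ⟨cV (i+(k-1)), ?_, hadjprev i⟩
            refine Finset.mem_union_left _ (Finset.mem_sdiff.mpr
              ⟨Finset.mem_filter.mpr ⟨Finset.mem_univ _, hdeg2 _⟩, ?_⟩)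
            intro hmm
            have hm1 : cV (i+(k-1)) = cV a ∨ cV (i+(k-1)) = cV b := by
              rcases Finset.mem_insert.mp hmm with h | h
              · exact Or.inl h
              · exact Or.inr (Finset.mem_singleton.mp h)
            have hc1' : cV (i+1) = cV a ∨ cV (i+1) = cV b := by
              rcases Finset.mem_insert.mp hc1 with h | h
              · exact Or.inl h
              · exact Or.inr (Finset.mem_singleton.mp h)
            rcases hi with hi' | hi' <;> rcases hc1' with hc' | hc' <;> rcases hm1 with hm' | hm' <;>
              first
                | exact hne1 (hc'.trans hi'.symm)
                | exact hnek (hm'.trans hi'.symm)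
                | exact hne2 (hc'.trans hm'.symm)
          · refine ⟨cV (i+1), ?_, (hadjnext i).symm⟩
            exact Finset.mem_union_left _ (Finset.mem_sdiff.mpr
              ⟨Finset.mem_filter.mpr ⟨Finset.mem_univ _, hdeg2 _⟩, hc1⟩)
        have hx' : x = cV a ∨ x = cV b := by
          rcases Finset.mem_insert.mp hpp with h | h
          · exact Or.inl h
          · exact Or.inr (Finset.mem_singleton.mp h)
        rcases hx' with h | h
        · rw [h]; exact hkey a (Or.inl rfl)
        · rw [h]; exact hkey b (Or.inr rfl)
      · left
        exact Finset.mem_union_left _ (Finset.mem_sdiff.mpr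
          ⟨Finset.mem_filter.mpr ⟨Finset.mem_univ _, h2⟩, hpp⟩)
  -- conclusion
  have hgd : dominationNumber G ≤ D.card := Nat.sInf_le ⟨D, hDdom, rfl⟩
  rw [hgamma] at hgd
  omega
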